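/- Cayley–Prüfer Theorem: For the complete graph K_n with edge weights ω_{ij} = x_i x_j for indeterminates x_1,…,x_n, the weighted spanning tree enumerator equals x_1 x_2 ⋯ x_n · (x_1 + ⋯ + x_n)^{n−2}, i.e., Σ_{T spanning tree of K_n} Π_{i=1}^n x_i^{deg_T(v_i)} = x_1 ⋯ x_n (x_1 + ⋯ + x_n)^{n−2}. -/

import Mathlib

set_option linter.unusedSectionVars false

open Finset Function

section Core

variable {V : Type*} [Fintype V] [DecidableEq V]

/-- The eventual value of iterating `p` (well-defined for maps satisfying `POk`). -/
def pex (p : V → V) : V → V := p^[Fintype.card V]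

/-- `p` is a "parent map" for the set `A`: it fixes everything outside `A`, and every
iteration eventually leaves `A`. -/
def POk (A : Finset V) (p : V → V) : Prop :=
  (∀ u, u ∉ A → p u = u) ∧ ∀ u, ∃ k, p^[k] u ∉ A

namespace POk

variable {A : Finset V} {p : V → V}

theorem fix (h : POk A p) {u : V} (hu : u ∉ A) : p u = u := h.1 u hu

theorem reach (h : POk A p) (u : V) : ∃ k, p^[k] u ∉ A := h.2 u

theorem stat (h : POk A p) {u : V} {k : ℕ} (hk : p^[k] u ∉ A) (m : ℕ) :
    p^[k + m] u = p^[k] u := by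
  induction m with
  | zero => rfl
  | succ m ih =>
      rw [← Nat.add_assoc, Function.iterate_succ_apply', ih, h.fix hk]

theorem pex_notMem (h : POk A p) (u : V) : pex p u ∉ A := by
  classical
  set k := Nat.find (h.reach u) with hkdef
  have hk : p^[k] u ∉ A := Nat.find_spec (h.reach u)
  have hdist : ∀ i j, i < j → j ≤ k → p^[i] u ≠ p^[j] u := by
    intro i j hij hjk he
    have h1 : p^[k - j + i] u = p^[k] u := by
      have : p^[k - j + i] u = p^[k-j] (p^[i] u) := Function.iterate_add_apply p _ _ u
      rw [this, he, ← Function.iterate_add_apply]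
      congr 1
      omega
    have hlt : k - j + i < k := by omega
    exact Nat.find_min (h.reach u) hlt (h1 ▸ hk)
  have hcard : k + 1 ≤ Fintype.card V := by
    have : (Finset.range (k+1)).card ≤ (Finset.univ : Finset V).card := by
      apply Finset.card_le_card_of_injOn (fun i => p^[i] u)
      · intro i _; exact Finset.mem_univ _
      · intro i hi j hj hij
        simp only [Finset.mem_coe, Finset.mem_range] at hi hj
        by_contra hne
        rcases Nat.lt_or_ge i j with hlt | hge
        · exact hdist i j hlt (by omega) hij
        · exact hdist j i (by omega) (by omega) hij.symm
    simpa using this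
  have : pex p u = p^[k] u := by
    show p^[Fintype.card V] u = p^[k] u
    have := h.stat hk (Fintype.card V - k)
    rw [← this]; congr 1; omega
  rw [this]; exact hk

theorem pex_eq (h : POk A p) {u : V} {k : ℕ} (hk : p^[k] u ∉ A) : pex p u = p^[k] u := by
  rcases le_or_gt k (Fintype.card V) with hle | hlt
  · show p^[Fintype.card V] u = p^[k] u
    have := h.stat hk (Fintype.card V - k)
    rw [← this]; congr 1; omega
  · have h1 : p^[Fintype.card V] u ∉ A := h.pex_notMem u
    have := h.stat h1 (k - Fintype.card V)
    show p^[Fintype.card V] u = p^[k] u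
    rw [← this]; congr 1; omega

theorem pex_fix (h : POk A p) {u : V} (hu : u ∉ A) : pex p u = u :=
  h.pex_eq (k := 0) hu

theorem pex_apply (h : POk A p) (u : V) : pex p (p u) = pex p u := by
  show p^[Fintype.card V] (p u) = p^[Fintype.card V] u
  rw [← Function.iterate_succ_apply]
  rw [Function.iterate_succ_apply']
  exact h.fix (h.pex_notMem u)

theorem pex_iterate (h : POk A p) (u : V) (i : ℕ) : pex p (p^[i] u) = pex p u := by
  induction i with
  | zero => rfl
  | succ i ih => rw [Function.iterate_succ_apply', h.pex_apply, ih]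

theorem ne_self (h : POk A p) {v : V} (hv : v ∈ A) : p v ≠ v := by
  intro he
  obtain ⟨k, hk⟩ := h.reach v
  rw [Function.iterate_fixed he] at hk
  exact hk hv

end POk

theorem iter_congr {v : V} {p p' : V → V} (hpp : ∀ w, w ≠ v → p w = p' w) {u : V} {k : ℕ}
    (hk : ∀ i, i < k → p'^[i] u ≠ v) : p^[k] u = p'^[k] u := by
  induction k with
  | zero => rfl
  | succ k ih =>
      rw [Function.iterate_succ_apply', Function.iterate_succ_apply',
        ih (fun i hi => hk i (by omega)), hpp _ (hk k (by omega))]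

end Core

section Surgery

variable {V : Type*} [Fintype V] [DecidableEq V]
variable {A : Finset V} {p p' : V → V} {v q : V}

theorem update_comm_ne (w : V) (hw : w ≠ v) : Function.update p v q w = p w :=
  Function.update_of_ne hw _ _

/-- Forward: erasing the chosen vertex. -/
theorem POk.erase_update (h : POk A p) (hv : v ∈ A) :
    POk (A.erase v) (Function.update p v v) := by
  set p' := Function.update p v v with hp'
  have hpp : ∀ w, w ≠ v → p w = p' w := fun w hw => (update_comm_ne w hw).symm
  constructor
  · intro u hu
    by_cases huv : u = v
    · subst huv; simp [hp']
    · rw [← hpp u huv]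
      exact h.fix (fun huA => hu (Finset.mem_erase.2 ⟨huv, huA⟩))
  · intro u
    by_cases hc : ∃ i, p^[i] u = v
    · set i := Nat.find hc with hidef
      have hi : p^[i] u = v := Nat.find_spec hc
      have hmin : ∀ j, j < i → p^[j] u ≠ v := fun j hj => Nat.find_min hc hj
      refine ⟨i, ?_⟩
      have : p'^[i] u = p^[i] u := iter_congr (fun w hw => (hpp w hw).symm) hmin
      rw [this, hi]
      exact Finset.notMem_erase v A
    · push_neg at hc
      obtain ⟨k, hk⟩ := h.reach u
      refine ⟨k, ?_⟩
      have : p'^[k] u = p^[k] u := iter_congr (fun w hw => (hpp w hw).symm) (fun i _ => hc i)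
      rw [this]
      exact fun hmem => hk (Finset.mem_of_mem_erase hmem)

theorem POk.pex_update_ne (h : POk A p) (hv : v ∈ A) :
    pex (Function.update p v v) (p v) ≠ v := by
  set p' := Function.update p v v with hp'
  have hpp : ∀ w, w ≠ v → p w = p' w := fun w hw => (update_comm_ne w hw).symm
  intro he
  have hc : ∃ i, p'^[i] (p v) = v := ⟨Fintype.card V, he⟩
  set i := Nat.find hc with hidef
  have hi : p'^[i] (p v) = v := Nat.find_spec hc
  have hmin : ∀ j, j < i → p'^[j] (p v) ≠ v := fun j hj => Nat.find_min hc hj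
  have hchain : p^[i] (p v) = p'^[i] (p v) := iter_congr hpp hmin
  have hper1 : p^[i + 1] v = v := by
    rw [Function.iterate_succ_apply, hchain, hi]
  have hper : ∀ m, p^[(i+1) * m] v = v := by
    intro m
    rw [Function.iterate_mul]
    exact Function.iterate_fixed hper1 m
  obtain ⟨k, hk⟩ := h.reach v
  have hk0 : k ≠ 0 := by
    intro h0; subst h0; exact hk hv
  have : p^[k + ((i+1) * k - k)] v = p^[k] v := h.stat hk _
  have h2 : p^[(i+1) * k] v = p^[k] v := by
    rw [← this]; congr 1
    have : k ≤ (i+1) * k := Nat.le_mul_of_pos_left k (by omega)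
    omega
  rw [hper k] at h2
  rw [← h2] at hk
  exact hk hv

/-- No iterate of `p'` ever hits `v` when the eventual value isn't `v` (with `v ∉ A`). -/
theorem POk.not_hit (h : POk A p') (hv : v ∉ A) {u : V} (hu : pex p' u ≠ v) :
    ∀ j, p'^[j] u ≠ v := by
  intro j hj
  exact hu (h.pex_eq (hj ▸ hv) ▸ hj)

/-- Backward: inserting the vertex `v` with parent `q`. -/
theorem POk.insert_update (h : POk A p') (hv : v ∉ A) (hq : pex p' q ≠ v) :
    POk (insert v A) (Function.update p' v q) := by
  set p := Function.update p' v q with hp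
  have hpp : ∀ w, w ≠ v → p w = p' w := fun w hw => update_comm_ne w hw
  have hB0 : ∀ u, pex p' u ≠ v → ∃ k, p^[k] u ∉ insert v A := by
    intro u hu
    obtain ⟨k, hk⟩ := h.reach u
    refine ⟨k, ?_⟩
    have : p^[k] u = p'^[k] u := iter_congr hpp (fun i _ => h.not_hit hv hu i)
    rw [this, Finset.mem_insert]
    push_neg
    exact ⟨h.not_hit hv hu k, hk⟩
  constructor
  · intro u hu
    rw [Finset.mem_insert] at hu
    push_neg at hu
    rw [hpp u hu.1]
    exact h.fix hu.2
  · intro u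
    by_cases hc : pex p' u = v
    · have hex : ∃ i, p'^[i] u = v := ⟨Fintype.card V, hc⟩
      set i := Nat.find hex with hidef
      have hi : p'^[i] u = v := Nat.find_spec hex
      have hmin : ∀ j, j < i → p'^[j] u ≠ v := fun j hj => Nat.find_min hex hj
      have hchain : p^[i] u = v := (iter_congr hpp hmin).trans hi
      obtain ⟨k, hk⟩ := hB0 q hq
      refine ⟨(k + 1) + i, ?_⟩
      rw [Function.iterate_add_apply, hchain, Function.iterate_succ_apply]
      have hpv : p v = q := by rw [hp]; exact Function.update_self v q p'
      rw [hpv]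
      exact hk
    · exact hB0 u hc

theorem POk.pex_update (h : POk A p') (hv : v ∉ A) (hq : pex p' q ≠ v) (u : V) :
    pex (Function.update p' v q) u = if pex p' u = v then pex p' q else pex p' u := by
  set p := Function.update p' v q with hp
  have hpp : ∀ w, w ≠ v → p w = p' w := fun w hw => update_comm_ne w hw
  have hP : POk (insert v A) p := h.insert_update hv hq
  have hneg : ∀ w, pex p' w ≠ v → pex p w = pex p' w := by
    intro w hw
    show p^[Fintype.card V] w = p'^[Fintype.card V] w
    exact iter_congr hpp (fun i _ => h.not_hit hv hw i)
  by_cases hc : pex p' u = v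
  · rw [if_pos hc]
    have hex : ∃ i, p'^[i] u = v := ⟨Fintype.card V, hc⟩
    set i := Nat.find hex with hidef
    have hi : p'^[i] u = v := Nat.find_spec hex
    have hmin : ∀ j, j < i → p'^[j] u ≠ v := fun j hj => Nat.find_min hex hj
    have hchain : p^[i] u = v := (iter_congr hpp hmin).trans hi
    calc pex p u = pex p (p^[i] u) := (hP.pex_iterate u i).symm
      _ = pex p (p v) := by rw [hchain]; exact (hP.pex_apply v).symm
      _ = pex p q := by rw [hp]; rw [Function.update_self]
      _ = pex p' q := hneg q hq
  · rw [if_neg hc]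
    exact hneg u hc

end Surgery

section Sums

variable {V : Type*} [Fintype V] [DecidableEq V]
variable {R : Type*} [CommRing R]

open Classical in
noncomputable def okSet (A : Finset V) : Finset (V → V) := Finset.univ.filter (POk A)

theorem mem_okSet {A : Finset V} {p : V → V} : p ∈ okSet A ↔ POk A p := by
  simp [okSet]

noncomputable def SS (x : V → R) (A : Finset V) : R := ∑ p ∈ okSet A, ∏ u ∈ A, x (p u)

noncomputable def TT (x : V → R) (A : Finset V) (b : V) : R :=
  ∑ p ∈ okSet A, (∑ u ∈ A.filter (fun u => pex p u = b), x u) * ∏ u ∈ A, x (p u)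

variable {A : Finset V} {p p' : V → V} {v q b : V} {x : V → R}

theorem sum_decomp (hv : v ∈ A) (f : (V → V) → R) :
    ∑ p ∈ okSet A, f p
      = ∑ p' ∈ okSet (A.erase v), ∑ q ∈ Finset.univ.filter (fun q => pex p' q ≠ v),
          f (Function.update p' v q) := by
  rw [Finset.sum_sigma']
  refine Finset.sum_nbij' (fun p => ⟨Function.update p v v, p v⟩)
    (fun σ => Function.update σ.1 v σ.2) ?_ ?_ ?_ ?_ ?_
  · intro p hp
    rw [mem_okSet] at hp
    rw [Finset.mem_sigma]
    exact ⟨mem_okSet.2 (hp.erase_update hv), by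
      simp only [Finset.mem_filter, Finset.mem_univ, true_and]
      exact hp.pex_update_ne hv⟩
  · rintro ⟨p', q⟩ hσ
    rw [Finset.mem_sigma, Finset.mem_filter] at hσ
    have h1 := mem_okSet.1 hσ.1
    have h2 := hσ.2.2
    have := h1.insert_update (Finset.notMem_erase v A) h2
    rw [Finset.insert_erase hv] at this
    exact mem_okSet.2 this
  · intro p hp
    show Function.update (Function.update p v v) v (p v) = p
    funext z
    by_cases hz : z = v
    · subst hz; simp
    · simp [Function.update_of_ne hz]
  · rintro ⟨p', q⟩ hσ
    rw [Finset.mem_sigma] at hσ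
    have h1 := mem_okSet.1 hσ.1
    have hfst : Function.update (Function.update p' v q) v v = p' := by
      funext z
      by_cases hz : z = v
      · subst hz
        simp only [Function.update_self]
        exact (h1.fix (Finset.notMem_erase _ A)).symm
      · simp [Function.update_of_ne hz]
    have hsnd : (Function.update p' v q) v = q := Function.update_self v q p'
    show (⟨Function.update (Function.update p' v q) v v, (Function.update p' v q) v⟩ :
        Σ _ : V → V, V) = ⟨p', q⟩
    rw [hfst, hsnd]
  · intro p hp
    show f p = f (Function.update (Function.update p v v) v (p v))
    congr 1
    funext z
    by_cases hz : z = v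
    · subst hz; simp
    · simp [Function.update_of_ne hz]

theorem filter_pex_eq (h : POk A p') (hb : b ∉ A) :
    Finset.univ.filter (fun q => pex p' q = b)
      = insert b (A.filter (fun u => pex p' u = b)) := by
  ext w
  simp only [Finset.mem_filter, Finset.mem_univ, true_and, Finset.mem_insert]
  constructor
  · intro hw
    by_cases hwA : w ∈ A
    · exact Or.inr ⟨hwA, hw⟩
    · left
      rw [← hw, h.pex_fix hwA]
  · rintro (rfl | ⟨_, hw⟩)
    · exact h.pex_fix hb
    · exact hw

theorem sum_filter_pex (h : POk A p') (hb : b ∉ A) :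
    ∑ q ∈ Finset.univ.filter (fun q => pex p' q = b), x q
      = x b + ∑ u ∈ A.filter (fun u => pex p' u = b), x u := by
  rw [filter_pex_eq h hb, Finset.sum_insert]
  intro hmem
  exact hb (Finset.mem_filter.1 hmem).1

theorem sum_filter_pex_ne (h : POk A p') {v : V} (hv : v ∉ A) :
    ∑ q ∈ Finset.univ.filter (fun q => pex p' q ≠ v), x q
      = (∑ u, x u) - x v - ∑ u ∈ A.filter (fun u => pex p' u = v), x u := by
  have hsplit := Finset.sum_filter_add_sum_filter_not Finset.univ (fun q => pex p' q ≠ v) x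
  have hnot : (Finset.univ.filter (fun q => ¬ pex p' q ≠ v))
      = Finset.univ.filter (fun q => pex p' q = v) := by
    apply Finset.filter_congr
    intro w _
    simp
  rw [hnot, sum_filter_pex h hv] at hsplit
  linear_combination hsplit

theorem inner_S (h' : POk (A.erase v) p') (hv : v ∈ A) :
    ∑ q ∈ Finset.univ.filter (fun q => pex p' q ≠ v), ∏ u ∈ A, x (Function.update p' v q u)
      = ((∑ u, x u) - x v - ∑ u ∈ (A.erase v).filter (fun u => pex p' u = v), x u)
          * ∏ u ∈ A.erase v, x (p' u) := by
  have hprod : ∀ w : V, ∏ u ∈ A, x (Function.update p' v w u)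
      = x w * ∏ u ∈ A.erase v, x (p' u) := by
    intro w
    rw [← Finset.mul_prod_erase A _ hv, Function.update_self]
    congr 1
    apply Finset.prod_congr rfl
    intro u hu
    rw [Function.update_of_ne (Finset.mem_erase.1 hu).1]
  rw [Finset.sum_congr rfl fun w _ => hprod w, ← Finset.sum_mul,
    sum_filter_pex_ne h' (Finset.notMem_erase v A)]

end Sums


section Sums2

variable {V : Type*} [Fintype V] [DecidableEq V]
variable {R : Type*} [CommRing R]
variable {A : Finset V} {p p' : V → V} {v q b : V} {x : V → R}

theorem prod_update (hv : v ∈ A) (w : V) :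
    ∏ u ∈ A, x (Function.update p' v w u) = x w * ∏ u ∈ A.erase v, x (p' u) := by
  rw [← Finset.mul_prod_erase A _ hv, Function.update_self]
  congr 1
  apply Finset.prod_congr rfl
  intro u hu
  rw [Function.update_of_ne (Finset.mem_erase.1 hu).1]

theorem vertexsum (h' : POk (A.erase v) p') (hv : v ∈ A) (hq : pex p' q ≠ v) (hb : b ∉ A) :
    ∑ u ∈ A.filter (fun u => pex (Function.update p' v q) u = b), x u
      = (∑ u ∈ (A.erase v).filter (fun u => pex p' u = b), x u)
        + (if pex p' q = b then
            x v + ∑ u ∈ (A.erase v).filter (fun u => pex p' u = v), x u else 0) := by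
  have hbv : b ≠ v := fun h => hb (h ▸ hv)
  have hpex := h'.pex_update (Finset.notMem_erase v A) hq
  rw [Finset.sum_filter, ← Finset.add_sum_erase A _ hv]
  have hval : (if pex (Function.update p' v q) v = b then x v else 0)
      = if pex p' q = b then x v else 0 := by
    rw [hpex v, h'.pex_fix (Finset.notMem_erase v A), if_pos rfl]
  rw [hval]
  have hterm : ∀ u ∈ A.erase v,
      (if pex (Function.update p' v q) u = b then x u else 0)
        = (if pex p' u = b then x u else 0)
          + (if pex p' q = b then (if pex p' u = v then x u else 0) else 0) := by
    intro u _
    rw [hpex u]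
    by_cases h1 : pex p' u = v
    · rw [if_pos h1, if_neg (h1 ▸ hbv.symm : ¬ pex p' u = b)]
      by_cases h2 : pex p' q = b
      · rw [if_pos h2, if_pos h2, if_pos h1, zero_add]
      · rw [if_neg h2, if_neg h2, add_zero]
    · rw [if_neg h1]
      by_cases h2 : pex p' q = b
      · rw [if_pos h2, if_neg h1, add_zero]
      · rw [if_neg h2, add_zero]
  rw [Finset.sum_congr rfl hterm, Finset.sum_add_distrib,
    Finset.sum_filter, Finset.sum_filter]
  by_cases h2 : pex p' q = b
  · simp only [if_pos h2]
    try ring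
  · simp only [if_neg h2]
    try simp

theorem inner_T (h' : POk (A.erase v) p') (hv : v ∈ A) (hb : b ∉ A) :
    ∑ q ∈ Finset.univ.filter (fun q => pex p' q ≠ v),
        (∑ u ∈ A.filter (fun u => pex (Function.update p' v q) u = b), x u)
          * ∏ u ∈ A, x (Function.update p' v q u)
      = ((∑ u, x u) * (∑ u ∈ (A.erase v).filter (fun u => pex p' u = b), x u)
          + x b * x v
          + x b * ∑ u ∈ (A.erase v).filter (fun u => pex p' u = v), x u)
          * ∏ u ∈ A.erase v, x (p' u) := by
  have hbv : b ≠ v := fun h => hb (h ▸ hv)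
  set Db := ∑ u ∈ (A.erase v).filter (fun u => pex p' u = b), x u with hDb
  set Dv := ∑ u ∈ (A.erase v).filter (fun u => pex p' u = v), x u with hDv
  set w' := ∏ u ∈ A.erase v, x (p' u) with hw'
  have hstep : ∀ w ∈ Finset.univ.filter (fun q => pex p' q ≠ v),
      (∑ u ∈ A.filter (fun u => pex (Function.update p' v w) u = b), x u)
        * ∏ u ∈ A, x (Function.update p' v w u)
      = (Db * x w) * w' + (if pex p' w = b then ((x v + Dv) * x w) * w' else 0) := by
    intro w hw
    rw [Finset.mem_filter] at hw
    rw [vertexsum h' hv hw.2 hb, prod_update hv]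
    by_cases h2 : pex p' w = b
    · rw [if_pos h2, if_pos h2]; ring
    · rw [if_neg h2, if_neg h2]; ring
  rw [Finset.sum_congr rfl hstep, Finset.sum_add_distrib]
  have h1 : ∑ w ∈ Finset.univ.filter (fun q => pex p' q ≠ v), (Db * x w) * w'
      = Db * ((∑ u, x u) - x v - Dv) * w' := by
    rw [← Finset.sum_mul, ← Finset.mul_sum,
      sum_filter_pex_ne h' (Finset.notMem_erase v A)]
  have h2 : ∑ w ∈ Finset.univ.filter (fun q => pex p' q ≠ v),
      (if pex p' w = b then ((x v + Dv) * x w) * w' else 0)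
      = (x v + Dv) * (x b + Db) * w' := by
    rw [← Finset.sum_filter, Finset.filter_filter]
    have hff : Finset.univ.filter (fun q => pex p' q ≠ v ∧ pex p' q = b)
        = Finset.univ.filter (fun q => pex p' q = b) := by
      apply Finset.filter_congr
      intro w _
      constructor
      · exact fun h => h.2
      · exact fun h => ⟨by rw [h]; exact hbv, h⟩
    rw [hff, ← Finset.sum_mul, ← Finset.mul_sum, sum_filter_pex h' (fun hmem => hb (Finset.mem_of_mem_erase hmem))]
  rw [h1, h2]
  ring

end Sums2

section Main

variable {V : Type*} [Fintype V] [DecidableEq V]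
variable {R : Type*} [CommRing R]
variable {A : Finset V} {v b : V} {x : V → R}

theorem step_S (hv : v ∈ A) :
    SS x A = ((∑ u, x u) - x v) * SS x (A.erase v) - TT x (A.erase v) v := by
  unfold SS
  rw [sum_decomp hv]
  rw [Finset.sum_congr rfl (fun p' hp' => inner_S (mem_okSet.1 hp') hv)]
  simp only [SS, TT]
  have hsplit : ∀ p' ∈ okSet (A.erase v),
      ((∑ u, x u) - x v - ∑ u ∈ (A.erase v).filter (fun u => pex p' u = v), x u)
          * ∏ u ∈ A.erase v, x (p' u)
        = ((∑ u, x u) - x v) * ∏ u ∈ A.erase v, x (p' u)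
          - (∑ u ∈ (A.erase v).filter (fun u => pex p' u = v), x u)
              * ∏ u ∈ A.erase v, x (p' u) := fun p' _ => by ring
  rw [Finset.sum_congr rfl hsplit, Finset.sum_sub_distrib, ← Finset.mul_sum]

theorem step_T (hv : v ∈ A) (hb : b ∉ A) :
    TT x A b = (∑ u, x u) * TT x (A.erase v) b + x b * x v * SS x (A.erase v)
      + x b * TT x (A.erase v) v := by
  unfold TT
  rw [sum_decomp hv]
  rw [Finset.sum_congr rfl (fun p' hp' => inner_T (mem_okSet.1 hp') hv hb)]
  simp only [SS, TT]
  rw [Finset.mul_sum, Finset.mul_sum, Finset.mul_sum, ← Finset.sum_add_distrib,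
    ← Finset.sum_add_distrib]
  apply Finset.sum_congr rfl
  intro p' _
  ring

theorem okSet_empty : okSet (∅ : Finset V) = {(id : V → V)} := by
  ext p
  rw [mem_okSet, Finset.mem_singleton]
  constructor
  · intro h
    funext u
    exact h.1 u (Finset.notMem_empty u)
  · rintro rfl
    exact ⟨fun u _ => rfl, fun u => ⟨0, Finset.notMem_empty u⟩⟩

theorem core (x : V → R) (A : Finset V) :
    ((∑ u, x u) * SS x A = (∑ u ∈ Aᶜ, x u) * (∑ u, x u) ^ A.card) ∧
    (∀ b ∉ A, (∑ u, x u) * TT x A b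
      = x b * (∑ u ∈ A, x u) * (∑ u, x u) ^ A.card) := by
  induction A using Finset.strongInduction with
  | _ A ih =>
    rcases A.eq_empty_or_nonempty with rfl | ⟨v, hv⟩
    · constructor
      · rw [SS, okSet_empty]
        simp
      · intro b _
        rw [TT, okSet_empty]
        simp
    · have hvE := Finset.notMem_erase v A
      have hsub : A.erase v ⊂ A := Finset.erase_ssubset hv
      obtain ⟨ihS, ihT⟩ := ih (A.erase v) hsub
      have hcard : A.card = (A.erase v).card + 1 := by
        rw [Finset.card_erase_of_mem hv]
        have : 1 ≤ A.card := Finset.card_pos.2 ⟨v, hv⟩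
        omega
      have hcompl : ∑ u ∈ (A.erase v)ᶜ, x u = (∑ u ∈ Aᶜ, x u) + x v := by
        rw [Finset.compl_erase, Finset.sum_insert (by simp [hv])]
        ring
      have hsum : ∑ u ∈ A.erase v, x u = (∑ u ∈ A, x u) - x v := by
        have := Finset.add_sum_erase A x hv
        linear_combination this
      have htot : (∑ u ∈ A, x u) + (∑ u ∈ Aᶜ, x u) = ∑ u, x u :=
        Finset.sum_add_sum_compl A x
      rw [hcompl] at ihS
      rw [hsum] at ihT
      constructor
      · rw [step_S hv, hcard, pow_succ]
        have hTv := ihT v hvE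
        linear_combination ((∑ u, x u) - x v) * ihS - hTv
          - (x v * (∑ u, x u) ^ (A.erase v).card) * htot
      · intro b hb
        have hbE : b ∉ A.erase v := fun h => hb (Finset.mem_of_mem_erase h)
        rw [step_T hv hb, hcard, pow_succ]
        have hTb := ihT b hbE
        have hTv := ihT v hvE
        linear_combination (∑ u, x u) * hTb + x b * x v * ihS + x b * hTv
          + (x b * x v * (∑ u, x u) ^ (A.erase v).card) * htot
end Main

section Trees

open SimpleGraph

variable {V : Type*} [Fintype V] [DecidableEq V] {r : V} {p : V → V}

/-- Height: number of steps to leave `A`. -/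
noncomputable def ht {A : Finset V} {p : V → V} (hP : POk A p) (u : V) : ℕ :=
  Nat.find (hP.reach u)

theorem ht_spec {A : Finset V} (hP : POk A p) (u : V) : p^[ht hP u] u ∉ A :=
  Nat.find_spec (hP.reach u)

theorem ht_notMem {A : Finset V} (hP : POk A p) {u : V} (hu : u ∉ A) : ht hP u = 0 :=
  Nat.find_eq_zero _ |>.2 hu

theorem ht_mem {A : Finset V} (hP : POk A p) {u : V} (hu : u ∈ A) :
    ht hP u = ht hP (p u) + 1 := by
  have h1 : ht hP u ≠ 0 := by
    intro h0
    exact (h0 ▸ ht_spec hP u) hu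
  have h2 : p^[ht hP u - 1] (p u) ∉ A := by
    have := ht_spec hP u
    rwa [show ht hP u = (ht hP u - 1) + 1 by omega, Function.iterate_succ_apply] at this
  have h3 : ht hP (p u) ≤ ht hP u - 1 := Nat.find_le h2
  have h4 : p^[ht hP (p u) + 1] u ∉ A := by
    rw [Function.iterate_succ_apply]
    exact ht_spec hP (p u)
  have h5 : ht hP u ≤ ht hP (p u) + 1 := Nat.find_le h4
  omega

/-- The functional graph of a parent map. -/
def graphOf (p : V → V) : SimpleGraph V := SimpleGraph.fromRel (fun a b => p a = b)

theorem graphOf_adj {a b : V} : (graphOf p).Adj a b ↔ a ≠ b ∧ (p a = b ∨ p b = a) :=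
  SimpleGraph.fromRel_adj _ a b

theorem mem_erase_univ {u : V} : u ∈ Finset.univ.erase r ↔ u ≠ r := by simp

theorem graphOf_adj_self (hP : POk (Finset.univ.erase r) p) {u : V} (hu : u ≠ r) :
    (graphOf p).Adj u (p u) :=
  graphOf_adj.2 ⟨Ne.symm (hP.ne_self (mem_erase_univ.2 hu)), Or.inl rfl⟩

/-- The canonical walk from `u` to the root along the parent map. -/
noncomputable def chainWalk (hP : POk (Finset.univ.erase r) p) (u : V) :
    (graphOf p).Walk u r :=
  if hu : u = r then (SimpleGraph.Walk.nil : (graphOf p).Walk r r).copy hu.symm rfl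
  else SimpleGraph.Walk.cons (graphOf_adj_self hP hu) (chainWalk hP (p u))
termination_by ht hP u
decreasing_by
  rw [ht_mem hP (mem_erase_univ.2 hu)]
  omega

theorem chainWalk_eq_of_ne (hP : POk (Finset.univ.erase r) p) {u : V} (hu : u ≠ r) :
    chainWalk hP u = SimpleGraph.Walk.cons (graphOf_adj_self hP hu) (chainWalk hP (p u)) := by
  rw [chainWalk]
  exact dif_neg hu

theorem chainWalk_eq_of_eq (hP : POk (Finset.univ.erase r) p) :
    chainWalk hP r = (SimpleGraph.Walk.nil : (graphOf p).Walk r r).copy rfl rfl := by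
  rw [chainWalk]
  exact dif_pos rfl

theorem chainWalk_good (hP : POk (Finset.univ.erase r) p) (u : V) :
    (chainWalk hP u).IsPath ∧ ∀ y ∈ (chainWalk hP u).support, ht hP y ≤ ht hP u := by
  generalize hk : ht hP u = k
  induction k generalizing u with
  | zero =>
      have hu : u = r := by
        by_contra hur
        rw [ht_mem hP (mem_erase_univ.2 hur)] at hk
        omega
      subst hu
      rw [chainWalk_eq_of_eq hP]
      constructor
      · simp
      · intro y hy
        simp only [SimpleGraph.Walk.support_copy, SimpleGraph.Walk.support_nil,
          List.mem_singleton] at hy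
        subst hy
        omega
  | succ k ih =>
      by_cases hu : u = r
      · subst hu
        rw [ht_notMem hP (Finset.notMem_erase _ _)] at hk
        omega
      · have hmem : u ∈ Finset.univ.erase r := mem_erase_univ.2 hu
        have hpu : ht hP (p u) = k := by
          have := ht_mem hP hmem
          omega
        obtain ⟨ihP, ihS⟩ := ih (p u) hpu
        rw [chainWalk_eq_of_ne hP hu]
        have hnotmem : u ∉ (chainWalk hP (p u)).support := by
          intro hmem'
          have := ihS u hmem'
          omega
        refine ⟨SimpleGraph.Walk.IsPath.cons ihP hnotmem, ?_⟩
        intro y hy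
        rw [SimpleGraph.Walk.support_cons, List.mem_cons] at hy
        rcases hy with rfl | hy
        · omega
        · have := ihS y hy
          omega

theorem graphOf_connected (hP : POk (Finset.univ.erase r) p) : (graphOf p).Connected := by
  rw [SimpleGraph.connected_iff]
  refine ⟨fun a b => ?_, ⟨r⟩⟩
  exact (chainWalk hP a).reachable.trans (chainWalk hP b).reachable.symm

theorem graphOf_acyclic (hP : POk (Finset.univ.erase r) p) : (graphOf p).IsAcyclic := by
  intro a c hc
  have hsupne : c.support.toFinset.Nonempty := by
    refine ⟨a, ?_⟩
    rw [List.mem_toFinset]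
    exact c.start_mem_support
  obtain ⟨m, hmS, hmax⟩ := Finset.exists_max_image c.support.toFinset (ht hP) hsupne
  rw [List.mem_toFinset] at hmS
  have hmax' : ∀ y ∈ c.support, ht hP y ≤ ht hP m := by
    intro y hy
    exact hmax y (List.mem_toFinset.2 hy)
  set c' := c.rotate m hmS with hc'def
  have hc' : c'.IsCycle := hc.rotate hmS
  have hlen : 3 ≤ c'.length := hc'.three_le_length
  have hnn : ¬ c'.Nil := by
    rw [SimpleGraph.Walk.nil_iff_length_eq]
    omega
  obtain ⟨b, h₁, q, hq⟩ := SimpleGraph.Walk.not_nil_iff.1 hnn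
  -- membership transfer: anything in the tail of c' is in c.support
  have htail : ∀ y, y ∈ c'.support.tail → y ∈ c.support := by
    intro y hy
    have hrot := SimpleGraph.Walk.support_rotate c m hmS
    have : y ∈ c.support.tail := hrot.mem_iff.1 hy
    exact List.mem_of_mem_tail this
  have hbq : b ∈ q.support := q.start_mem_support
  have hbc : b ∈ c.support := by
    apply htail
    rw [hq, SimpleGraph.Walk.support_cons]
    simpa using hbq
  -- decompose the end of q
  have hqnn : ¬ q.Nil := by
    rw [SimpleGraph.Walk.nil_iff_length_eq]
    have : c'.length = q.length + 1 := by rw [hq]; simp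
    omega
  have hqrnn : ¬ q.reverse.Nil := by
    rw [SimpleGraph.Walk.nil_iff_length_eq, SimpleGraph.Walk.length_reverse]
    rw [SimpleGraph.Walk.nil_iff_length_eq] at hqnn
    omega
  obtain ⟨d, h₂, q₂, hq₂⟩ := SimpleGraph.Walk.not_nil_iff.1 hqrnn
  have hdq : d ∈ q.support := by
    have : d ∈ q.reverse.support := by
      rw [hq₂, SimpleGraph.Walk.support_cons]
      exact List.mem_cons_of_mem _ q₂.start_mem_support
    rwa [SimpleGraph.Walk.support_reverse, List.mem_reverse] at this
  have hdc : d ∈ c.support := by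
    apply htail
    rw [hq, SimpleGraph.Walk.support_cons]
    simpa using hdq
  -- edges
  have hmd_mem : s(m, d) ∈ q.edges := by
    have : s(m, d) ∈ q.reverse.edges := by
      rw [hq₂, SimpleGraph.Walk.edges_cons]
      exact List.mem_cons_self
    rwa [SimpleGraph.Walk.edges_reverse, List.mem_reverse] at this
  have hmb_notmem : s(m, b) ∉ q.edges := by
    have htrail := hc'.isTrail
    rw [hq] at htrail
    have := htrail.edges_nodup
    rw [SimpleGraph.Walk.edges_cons] at this
    exact (List.nodup_cons.1 this).1
  have hbd : b ≠ d := by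
    intro hbd
    rw [← hbd] at hmd_mem
    exact hmb_notmem hmd_mem
  -- both b and d must be children of m
  have hkey : ∀ y, (graphOf p).Adj m y → y ∈ c.support → p m = y := by
    intro y hadj hyc
    rcases (graphOf_adj.1 hadj).2 with h | h
    · exact h
    · exfalso
      have hyr : y ≠ r := by
        intro hyr
        subst hyr
        rw [hP.fix (by simp : y ∉ Finset.univ.erase y)] at h
        exact (graphOf_adj.1 hadj).1 h.symm
      have := ht_mem hP (mem_erase_univ.2 hyr)
      rw [h] at this
      have := hmax' y hyc
      omega
  have hb' : p m = b := hkey b h₁ hbc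
  have hd' : p m = d := hkey d h₂ hdc
  exact hbd (hb' ▸ hd')

theorem graphOf_isTree (hP : POk (Finset.univ.erase r) p) : (graphOf p).IsTree :=
  ⟨graphOf_connected hP, graphOf_acyclic hP⟩

end Trees

section TreeSide

open SimpleGraph

variable {V : Type*} [Fintype V] [DecidableEq V]

/-- The chosen path from `u` to `r` in a tree. -/
noncomputable def pathTo {T : SimpleGraph V} (hT : T.IsTree) (u w : V) : T.Walk u w :=
  (hT.existsUnique_path u w).exists.choose

theorem pathTo_isPath {T : SimpleGraph V} (hT : T.IsTree) (u w : V) :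
    (pathTo hT u w).IsPath :=
  (hT.existsUnique_path u w).exists.choose_spec

theorem pathTo_unique {T : SimpleGraph V} (hT : T.IsTree) {u w : V} (q : T.Walk u w)
    (hq : q.IsPath) : q = pathTo hT u w :=
  (hT.existsUnique_path u w).unique hq (pathTo_isPath hT u w)

/-- The next vertex on the way to the root `r`. -/
noncomputable def nextV (r : V) {T : SimpleGraph V} (hT : T.IsTree) (u : V) : V :=
  if u = r then r else (pathTo hT u r).getVert 1

theorem nextV_r {r : V} {T : SimpleGraph V} (hT : T.IsTree) : nextV r hT r = r := if_pos rfl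

theorem nextV_ne {r u : V} {T : SimpleGraph V} (hT : T.IsTree) (hu : u ≠ r) :
    nextV r hT u = (pathTo hT u r).getVert 1 := if_neg hu

theorem pathTo_cons {r u : V} {T : SimpleGraph V} (hT : T.IsTree) (hu : u ≠ r) :
    ∃ (h : T.Adj u (nextV r hT u)) (q : T.Walk (nextV r hT u) r),
      pathTo hT u r = SimpleGraph.Walk.cons h q ∧ q = pathTo hT (nextV r hT u) r ∧
        (pathTo hT (nextV r hT u) r).length + 1 = (pathTo hT u r).length := by
  obtain ⟨w, hadj, q, hq⟩ := SimpleGraph.Walk.exists_eq_cons_of_ne hu (pathTo hT u r)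
  have hw : nextV r hT u = w := by
    rw [nextV_ne hT hu, hq, SimpleGraph.Walk.getVert_cons_succ, SimpleGraph.Walk.getVert_zero]
  subst hw
  have hqpath : q.IsPath := by
    have := pathTo_isPath hT u r
    rw [hq] at this
    exact this.of_cons
  have hqeq : q = pathTo hT (nextV r hT u) r := pathTo_unique hT q hqpath
  refine ⟨hadj, q, hq, hqeq, ?_⟩
  rw [← hqeq, hq]
  simp

theorem nextV_adj {r u : V} {T : SimpleGraph V} (hT : T.IsTree) (hu : u ≠ r) :
    T.Adj u (nextV r hT u) :=
  (pathTo_cons hT hu).choose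

theorem nextV_len {r u : V} {T : SimpleGraph V} (hT : T.IsTree) (hu : u ≠ r) :
    (pathTo hT (nextV r hT u) r).length < (pathTo hT u r).length := by
  obtain ⟨h, q, h1, h2, h3⟩ := pathTo_cons hT hu
  omega

theorem nextV_reach {r : V} {T : SimpleGraph V} (hT : T.IsTree) (u : V) :
    ∃ k, (nextV r hT)^[k] u = r := by
  generalize hL : (pathTo hT u r).length = L
  induction L using Nat.strong_induction_on generalizing u with
  | _ L ih =>
    by_cases hu : u = r
    · exact ⟨0, hu⟩
    · obtain ⟨k, hk⟩ := ih _ (hL ▸ nextV_len hT hu) (nextV r hT u) rfl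
      exact ⟨k + 1, by rwa [Function.iterate_succ_apply]⟩

theorem nextV_POk {r : V} {T : SimpleGraph V} (hT : T.IsTree) :
    POk (Finset.univ.erase r) (nextV r hT) := by
  constructor
  · intro u hu
    rw [mem_erase_univ] at hu
    push_neg at hu
    rw [hu, nextV_r]
  · intro u
    obtain ⟨k, hk⟩ := nextV_reach hT u
    exact ⟨k, by rw [hk]; exact Finset.notMem_erase r _⟩

theorem adj_nextV {r i j : V} {T : SimpleGraph V} (hT : T.IsTree) (h : T.Adj i j) :
    nextV r hT i = j ∨ nextV r hT j = i := by
  by_cases hi : i = r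
  · subst hi
    have hj : j ≠ i := (T.ne_of_adj h).symm
    right
    have hpath : (SimpleGraph.Walk.cons h.symm SimpleGraph.Walk.nil : T.Walk j i).IsPath := by
      rw [SimpleGraph.Walk.cons_isPath_iff]
      refine ⟨SimpleGraph.Walk.IsPath.nil, ?_⟩
      simp [hj]
    have := pathTo_unique hT _ hpath
    rw [nextV_ne hT hj, ← this]
    simp
  · by_cases hjP : j ∈ (pathTo hT i r).support
    · left
      have hij : i ≠ j := T.ne_of_adj h
      -- the path from i to j must be the single edge
      have hone : (SimpleGraph.Walk.cons h SimpleGraph.Walk.nil : T.Walk i j).IsPath := by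
        rw [SimpleGraph.Walk.cons_isPath_iff]
        refine ⟨SimpleGraph.Walk.IsPath.nil, by simp [hij]⟩
      have htake : ((pathTo hT i r).takeUntil j hjP).IsPath :=
        (pathTo_isPath hT i r).takeUntil hjP
      have he : (pathTo hT i r).takeUntil j hjP
          = SimpleGraph.Walk.cons h SimpleGraph.Walk.nil := by
        rw [pathTo_unique hT _ htake, pathTo_unique hT _ hone]
      have hspec := (pathTo hT i r).take_spec hjP
      rw [he] at hspec
      rw [nextV_ne hT hi, ← hspec]
      simp [SimpleGraph.Walk.getVert_cons_succ]
    · right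
      have hjr : j ≠ r := by
        intro hjr
        subst hjr
        exact hjP (pathTo hT i _).end_mem_support
      have hpath : (SimpleGraph.Walk.cons h.symm (pathTo hT i r) : T.Walk j r).IsPath := by
        rw [SimpleGraph.Walk.cons_isPath_iff]
        exact ⟨pathTo_isPath hT i r, hjP⟩
      have := pathTo_unique hT _ hpath
      rw [nextV_ne hT hjr, ← this]
      simp [SimpleGraph.Walk.getVert_cons_succ]

theorem graphOf_nextV {r : V} {T : SimpleGraph V} (hT : T.IsTree) :
    graphOf (nextV r hT) = T := by
  ext a b
  rw [graphOf_adj]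
  constructor
  · rintro ⟨hab, hor | hor⟩
    · have ha : a ≠ r := by
        intro ha
        subst ha
        rw [nextV_r] at hor
        exact hab hor
      exact hor ▸ nextV_adj hT ha
    · have hb : b ≠ r := by
        intro hb
        subst hb
        rw [nextV_r] at hor
        exact hab hor.symm
      exact (hor ▸ nextV_adj hT hb).symm
  · intro h
    exact ⟨T.ne_of_adj h, adj_nextV hT h⟩

theorem nextV_graphOf {r : V} {p : V → V} (hP : POk (Finset.univ.erase r) p) :
    nextV r (graphOf_isTree hP) u = p u := by
  set hT := graphOf_isTree hP
  by_cases hu : u = r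
  · subst hu
    rw [nextV_r, hP.fix (Finset.notMem_erase u _)]
  · have hchain := (chainWalk_good hP u).1
    have := pathTo_unique hT _ hchain
    rw [nextV_ne hT hu, ← this, chainWalk_eq_of_ne hP hu]
    simp [SimpleGraph.Walk.getVert_cons_succ]

end TreeSide

section Degrees

open SimpleGraph Finset

variable {V : Type*} [Fintype V] [DecidableEq V] {T : SimpleGraph V} {r i : V}

theorem nbhd_ne (hT : T.IsTree) (hi : i ≠ r) [Fintype (T.neighborSet i)] :
    T.neighborFinset i
      = insert (nextV r hT i) (univ.filter (fun u => u ≠ r ∧ nextV r hT u = i)) := by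
  ext j
  rw [mem_neighborFinset, Finset.mem_insert, Finset.mem_filter]
  constructor
  · intro h
    rcases adj_nextV (r := r) hT h with h1 | h1
    · exact Or.inl h1.symm
    · refine Or.inr ⟨Finset.mem_univ j, ?_, h1⟩
      intro hj
      subst hj
      rw [nextV_r] at h1
      exact hi h1.symm
  · rintro (rfl | ⟨_, hj, hji⟩)
    · exact nextV_adj hT hi
    · exact (hji ▸ nextV_adj hT hj).symm

theorem nextV_not_mem_filter (hT : T.IsTree) (hi : i ≠ r) :
    nextV r hT i ∉ univ.filter (fun u => u ≠ r ∧ nextV r hT u = i) := by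
  intro hm
  obtain ⟨-, hne, heq⟩ := Finset.mem_filter.1 hm
  have hP := nextV_POk (r := r) hT
  have h1 := ht_mem hP (mem_erase_univ.2 hi)
  have h2 := ht_mem hP (mem_erase_univ.2 hne)
  rw [heq] at h2
  omega

theorem degree_ne (hT : T.IsTree) (hi : i ≠ r) [Fintype (T.neighborSet i)] :
    T.degree i = (univ.filter (fun u => u ≠ r ∧ nextV r hT u = i)).card + 1 := by
  rw [← T.card_neighborFinset_eq_degree, nbhd_ne hT hi,
    Finset.card_insert_of_notMem (nextV_not_mem_filter hT hi)]

theorem nbhd_r (hT : T.IsTree) [Fintype (T.neighborSet r)] :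
    T.neighborFinset r = univ.filter (fun u => u ≠ r ∧ nextV r hT u = r) := by
  ext j
  rw [mem_neighborFinset, Finset.mem_filter]
  constructor
  · intro h
    have hj : j ≠ r := fun hjr => (T.ne_of_adj h) hjr.symm
    rcases adj_nextV (r := r) hT h with h1 | h1
    · rw [nextV_r] at h1
      exact absurd h1.symm hj
    · exact ⟨Finset.mem_univ j, hj, h1⟩
  · rintro ⟨-, hj, hjr⟩
    exact (hjr ▸ nextV_adj hT hj).symm

theorem degree_r (hT : T.IsTree) [Fintype (T.neighborSet r)] :
    T.degree r = (univ.filter (fun u => u ≠ r ∧ nextV r hT u = r)).card := by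
  rw [← T.card_neighborFinset_eq_degree, nbhd_r hT]

end Degrees

section Weight

open Finset

variable {V : Type*} [Fintype V] [DecidableEq V] {R : Type*} [CommRing R]

theorem weight_formula (x : V → R) (r : V) (p : V → V) (d : V → ℕ)
    (hd_r : d r = (univ.filter (fun u => u ≠ r ∧ p u = r)).card)
    (hd_ne : ∀ i, i ≠ r → d i = (univ.filter (fun u => u ≠ r ∧ p u = i)).card + 1) :
    ∏ i, x i ^ d i = (∏ u ∈ univ.erase r, x u) * ∏ u ∈ univ.erase r, x (p u) := by
  have hfib : ∏ i, x i ^ (univ.filter (fun u => u ≠ r ∧ p u = i)).card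
      = ∏ u ∈ univ.erase r, x (p u) := by
    rw [← Finset.prod_fiberwise_of_maps_to (g := p) (t := univ)
      (fun u _ => mem_univ (p u)) (fun u => x (p u))]
    apply Finset.prod_congr rfl
    intro y _
    have hset : (univ.erase r).filter (fun u => p u = y)
        = univ.filter (fun u => u ≠ r ∧ p u = y) := by
      ext u
      simp [Finset.mem_erase, and_comm]
    rw [hset]
    symm
    calc ∏ u ∈ univ.filter (fun u => u ≠ r ∧ p u = y), x (p u)
        = ∏ u ∈ univ.filter (fun u => u ≠ r ∧ p u = y), x y := by
          apply Finset.prod_congr rfl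
          intro u hu
          rw [(Finset.mem_filter.1 hu).2.2]
      _ = x y ^ (univ.filter (fun u => u ≠ r ∧ p u = y)).card := Finset.prod_const _
  rw [← Finset.mul_prod_erase univ (fun i => x i ^ d i) (mem_univ r), hd_r]
  have hsplit : ∏ i ∈ univ.erase r, x i ^ d i
      = (∏ i ∈ univ.erase r, x i ^ (univ.filter (fun u => u ≠ r ∧ p u = i)).card)
          * ∏ i ∈ univ.erase r, x i := by
    rw [← Finset.prod_mul_distrib]
    apply Finset.prod_congr rfl
    intro i hi
    rw [hd_ne i (Finset.mem_erase.1 hi).1, pow_succ]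
  rw [hsplit]
  have hall : x r ^ (univ.filter (fun u => u ≠ r ∧ p u = r)).card
      * ∏ i ∈ univ.erase r, x i ^ (univ.filter (fun u => u ≠ r ∧ p u = i)).card
      = ∏ i, x i ^ (univ.filter (fun u => u ≠ r ∧ p u = i)).card :=
    Finset.mul_prod_erase univ (fun i => x i ^ (univ.filter (fun u => u ≠ r ∧ p u = i)).card)
      (mem_univ r)
  calc x r ^ (univ.filter (fun u => u ≠ r ∧ p u = r)).card
        * ((∏ i ∈ univ.erase r, x i ^ (univ.filter (fun u => u ≠ r ∧ p u = i)).card)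
            * ∏ i ∈ univ.erase r, x i)
      = (x r ^ (univ.filter (fun u => u ≠ r ∧ p u = r)).card
          * ∏ i ∈ univ.erase r, x i ^ (univ.filter (fun u => u ≠ r ∧ p u = i)).card)
          * ∏ i ∈ univ.erase r, x i := by ring
    _ = (∏ i, x i ^ (univ.filter (fun u => u ≠ r ∧ p u = i)).card)
          * ∏ i ∈ univ.erase r, x i := by rw [hall]
    _ = (∏ u ∈ univ.erase r, x u) * ∏ u ∈ univ.erase r, x (p u) := by
          rw [hfib]; ring

end Weight

open Classical MvPolynomial in
theorem cayley_prufer {n : ℕ} (hn : 2 ≤ n) :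
    (∑ T : {T : SimpleGraph (Fin n) // T ≤ ⊤ ∧ T.IsTree},
        ∏ i, (X i : MvPolynomial (Fin n) ℤ) ^ (T : SimpleGraph (Fin n)).degree i)
      = (∏ i, (X i : MvPolynomial (Fin n) ℤ)) * (∑ i, (X i : MvPolynomial (Fin n) ℤ)) ^ (n - 2) := by
  have hn0 : 0 < n := by omega
  set r : Fin n := ⟨0, hn0⟩ with hr
  set A : Finset (Fin n) := Finset.univ.erase r with hA
  set x : Fin n → MvPolynomial (Fin n) ℤ := fun i => X i with hx
  set σ : MvPolynomial (Fin n) ℤ := ∑ i, x i with hσdef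
  have hbij : (∑ T : {T : SimpleGraph (Fin n) // T ≤ ⊤ ∧ T.IsTree},
        ∏ i, x i ^ (T : SimpleGraph (Fin n)).degree i)
      = ∑ p ∈ okSet A, (∏ u ∈ A, x u) * ∏ u ∈ A, x (p u) := by
    refine Finset.sum_bij' (fun T _ => nextV r T.prop.2)
      (fun p hp => ⟨graphOf p, le_top, graphOf_isTree (mem_okSet.1 hp)⟩)
      ?_ ?_ ?_ ?_ ?_
    · intro T _
      exact mem_okSet.2 (nextV_POk T.prop.2)
    · intro p hp
      exact Finset.mem_univ _
    · intro T _
      apply Subtype.ext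
      exact graphOf_nextV T.prop.2
    · intro p hp
      funext u
      exact nextV_graphOf (mem_okSet.1 hp)
    · intro T _
      exact weight_formula x r (nextV r T.prop.2) (fun i => (T : SimpleGraph (Fin n)).degree i)
        (degree_r T.prop.2) (fun i hi => degree_ne T.prop.2 hi)
  rw [hbij, ← Finset.mul_sum]
  have hSS : (∑ p ∈ okSet A, ∏ u ∈ A, x (p u)) = SS x A := rfl
  rw [hSS]
  obtain ⟨hS, -⟩ := core x A
  have hAc : Aᶜ = {r} := by
    rw [hA, Finset.compl_erase, Finset.compl_univ]
    rfl
  have hcard : A.card = n - 1 := by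
    rw [hA, Finset.card_erase_of_mem (Finset.mem_univ r), Finset.card_univ, Fintype.card_fin]
  rw [hAc, hcard, Finset.sum_singleton] at hS
  have hσ : σ ≠ 0 := by
    intro h0
    have h1 := congrArg (MvPolynomial.eval (fun _ : Fin n => (1:ℤ))) h0
    rw [hσdef] at h1
    simp only [map_sum, hx, MvPolynomial.eval_X, map_zero] at h1
    rw [Finset.sum_const, Finset.card_univ, Fintype.card_fin] at h1
    simp at h1
    omega
  apply mul_left_cancel₀ hσ
  calc σ * ((∏ u ∈ A, x u) * SS x A)
      = (∏ u ∈ A, x u) * (σ * SS x A) := by ring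
    _ = (∏ u ∈ A, x u) * (x r * σ ^ (n - 1)) := by rw [hS]
    _ = (x r * ∏ u ∈ A, x u) * σ ^ (n - 1) := by ring
    _ = (∏ i, x i) * σ ^ (n - 1) := by
        rw [hA, Finset.mul_prod_erase Finset.univ x (Finset.mem_univ r)]
    _ = σ * ((∏ i, x i) * σ ^ (n - 2)) := by
        rw [show n - 1 = (n - 2) + 1 by omega, pow_succ]
        ring
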